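/- Let a ≥ 9.6 and x ∈ [0, 1/2]. Then e^{-ax²} + e^{-a(x-1)²} < θ(π/a; x) < (1 + 1/1000) e^{-ax²}(1 + e^{-a(1-2x)}) ≤ 2(1 + 1/1000) e^{-ax²}, where θ(π/a; x) = ∑_{n∈ℤ} e^{-a(n+x)²}. -/

import Mathlib

open Real

set_option maxHeartbeats 1000000 in
/-- For a ≥ 9.6 and x ∈ [0,1/2]:
e^{-ax²} + e^{-a(x-1)²} < θ(π/a;x) < (1+1/1000)e^{-ax²}(1+e^{-a(1-2x)}) ≤ 2(1+1/1000)e^{-ax²},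
where θ(π/a;x) = ∑_{n∈ℤ} e^{-a(n+x)²}. -/
theorem stmt_12 (a : ℝ) (ha : 9.6 ≤ a) (x : ℝ) (hx : x ∈ Set.Icc (0 : ℝ) (1 / 2)) :
    Real.exp (-a * x ^ 2) + Real.exp (-a * (x - 1) ^ 2)
        < ∑' n : ℤ, Real.exp (-a * ((n : ℝ) + x) ^ 2) ∧
    (∑' n : ℤ, Real.exp (-a * ((n : ℝ) + x) ^ 2))
        < (1 + 1 / 1000) * Real.exp (-a * x ^ 2) * (1 + Real.exp (-a * (1 - 2 * x))) ∧
    (1 + 1 / 1000) * Real.exp (-a * x ^ 2) * (1 + Real.exp (-a * (1 - 2 * x)))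
        ≤ 2 * (1 + 1 / 1000) * Real.exp (-a * x ^ 2) := by
  obtain ⟨hx0, hx2⟩ := hx
  have ha0 : (0:ℝ) < a := by linarith
  set f : ℤ → ℝ := fun n => Real.exp (-a * ((n : ℝ) + x) ^ 2) with hf
  set E : ℝ := Real.exp (-a * x ^ 2) with hE
  set r : ℝ := Real.exp (-a) with hrdef
  have hr0 : 0 < r := exp_pos _
  have h2001 : (2001:ℝ) < Real.exp a := by
    have h8 : Real.exp 8 ≤ Real.exp a := exp_le_exp.2 (by linarith)
    have : (2001:ℝ) < Real.exp 8 := by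
      have h1 : (2.7:ℝ) < Real.exp 1 := by
        have := exp_one_gt_d9; linarith
      have h2 : Real.exp 8 = Real.exp 1 ^ 8 := by
        rw [← Real.exp_nat_mul]; norm_num
      have h3 : (2.7:ℝ)^8 < Real.exp 1 ^ 8 := by
        apply pow_lt_pow_left₀ h1 (by norm_num)
        norm_num
      rw [h2]; nlinarith
    linarith
  have hr2001 : r * 2001 < 1 := by
    rw [hrdef, exp_neg]
    have := (exp_pos a)
    rw [inv_mul_lt_iff₀ this]
    linarith
  have hr1 : r < 1 := by nlinarith
  have hr1' : 0 < 1 - r := by linarith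
  set S : ℝ := r / (1 - r) with hS
  have hSpos : 0 < S := div_pos hr0 hr1'
  have hS2000 : S < 1 / 2000 := by
    rw [hS, div_lt_div_iff₀ hr1' (by norm_num)]
    nlinarith
  have hE0 : 0 < E := exp_pos _
  -- summability pieces
  have key_p : ∀ n : ℕ, f ((n + 1 : ℕ)) ≤ E * r ^ (n + 1) := by
    intro n
    have : E * r ^ (n+1) = Real.exp (-a * x^2 + -a * (n+1)) := by
      rw [hE, hrdef, ← Real.exp_nat_mul, ← Real.exp_add, Real.exp_eq_exp]
      push_cast; ring
    rw [this, hf]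
    apply exp_le_exp.2
    push_cast
    have h : 0 ≤ a * (((n:ℝ)+1) * ((n:ℝ)+2*x)) := by positivity
    nlinarith [h]
  have key_m : ∀ n : ℕ, f (-(((n + 1 : ℕ) : ℤ) + 1)) ≤ E * r ^ (n + 1) := by
    intro n
    have : E * r ^ (n+1) = Real.exp (-a * x^2 + -a * (n+1)) := by
      rw [hE, hrdef, ← Real.exp_nat_mul, ← Real.exp_add, Real.exp_eq_exp]
      push_cast; ring
    rw [this, hf]
    apply exp_le_exp.2
    push_cast
    have h : 0 ≤ a * ((((n:ℝ)+1)^2 + ((n:ℝ)+2)*(1-2*x))) :=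
      mul_nonneg ha0.le (by nlinarith [sq_nonneg ((n:ℝ)+1), (Nat.cast_nonneg n : (0:ℝ) ≤ n)])
    nlinarith [h]
  have hgeom : Summable fun n : ℕ => E * r ^ (n + 1) := by
    apply Summable.mul_left
    exact (summable_geometric_of_lt_one hr0.le hr1).comp_injective (add_left_injective 1)
  have hgeom_sum : ∑' n : ℕ, E * r ^ (n + 1) = E * S := by
    have h1 : ∑' n : ℕ, E * r ^ (n + 1) = ∑' n : ℕ, (E * r) * r ^ n := by
      congr 1; funext n; ring
    rw [h1, tsum_mul_left, tsum_geometric_of_lt_one hr0.le hr1, hS]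
    field_simp
  have hsp : Summable fun n : ℕ => f n := by
    rw [← summable_nat_add_iff 1]
    exact Summable.of_nonneg_of_le (fun n => (exp_pos _).le) key_p hgeom
  have hsm : Summable fun n : ℕ => f (-(n + 1)) := by
    rw [← summable_nat_add_iff 1]
    exact Summable.of_nonneg_of_le (fun n => (exp_pos _).le) key_m hgeom
  have hsum : Summable f := Summable.of_nat_of_neg_add_one hsp hsm
  refine ⟨?_, ?_, ?_⟩
  · -- lower bound
    have hfin : ∑ n ∈ ({-1, 0, 1} : Finset ℤ), f n ≤ ∑' n : ℤ, f n :=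
      Summable.sum_le_tsum _ (fun i _ => (exp_pos _).le) hsum
    have hfs : ∑ n ∈ ({-1, 0, 1} : Finset ℤ), f n = f (-1) + f 0 + f 1 := by
      norm_num [Finset.sum_insert, Finset.mem_insert]
      ring
    have h1 : f (-1) = Real.exp (-a * (x - 1) ^ 2) := by
      have he : -a * (((-1:ℤ):ℝ) + x)^2 = -a * (x-1)^2 := by push_cast; ring
      simp only [hf]
      rw [he]
    have h0 : f 0 = E := by rw [hf, hE]; norm_num
    have hpos : 0 < f 1 := exp_pos _
    rw [hfs, h1, h0] at hfin
    linarith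
  · -- upper bound
    have hsplit : ∑' n : ℤ, f n = (∑' n : ℕ, f n) + ∑' n : ℕ, f (-(n + 1)) :=
      tsum_of_nat_of_neg_add_one hsp hsm
    have hp : ∑' n : ℕ, f n ≤ E + E * S := by
      rw [Summable.tsum_eq_zero_add hsp]
      have h0 : f (0:ℕ) = E := by rw [hf, hE]; norm_num
      rw [h0]
      gcongr
      exact le_trans (Summable.tsum_le_tsum key_p ((summable_nat_add_iff 1).2 hsp) hgeom)
        (le_of_eq hgeom_sum)
    have hm : ∑' n : ℕ, f (-(n + 1)) ≤ E * Real.exp (-a * (1 - 2 * x)) + E * S := by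
      rw [Summable.tsum_eq_zero_add hsm]
      have h0 : f (-(((0:ℕ) : ℤ) + 1)) = E * Real.exp (-a * (1 - 2 * x)) := by
        rw [hf, hE, ← Real.exp_add, Real.exp_eq_exp]
        push_cast; ring
      rw [h0]
      gcongr
      exact le_trans (Summable.tsum_le_tsum key_m ((summable_nat_add_iff 1).2 hsm) hgeom)
        (le_of_eq hgeom_sum)
    have hEexp : 0 < Real.exp (-a * (1 - 2 * x)) := exp_pos _
    rw [hsplit]
    nlinarith [mul_pos hE0 hEexp, mul_pos hE0 hSpos, mul_lt_mul_of_pos_left hS2000 hE0]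
  · have hle1 : Real.exp (-a * (1 - 2 * x)) ≤ 1 := by
      rw [exp_le_one_iff]; nlinarith
    nlinarith
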